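/- arXiv:2207.11419 — 4 statements merged into one kernel-verified Lean document; each statement's English description precedes it below -/
import Mathlib

section
/- Let φ ∈ L^∞([0,1]) and α ∈ [0,1], and let 1 < p < ∞. If ‖φ‖_∞ ≤ 1 or if the Lebesgue measure of {x ∈ [0,1] : φ(x) = 0} is positive, then the weighted translation operator T_{φ,α} on L^p([0,1]) is not hypercyclic. -/
open MeasureTheory Set Filter Topology Polynomial
open scoped ENNReal NNReal

/-- Lebesgue measure restricted to `[0,1]`. -/
noncomputable def μ01 : Measure ℝ := volume.restrict (Set.Icc 0 1)

/-- `T` is the Bishop operator `T_α` on `L^p([0,1])`, i.e.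
`(T f)(x) = x · f({x + α})` for a.e. `x ∈ [0,1]`, where `{·}` is the fractional part. -/
def IsBishopOp (p : ℝ≥0∞) [Fact (1 ≤ p)] (α : ℝ)
    (T : Lp ℂ p μ01 →L[ℂ] Lp ℂ p μ01) : Prop :=
  ∀ f : Lp ℂ p μ01, ∀ᵐ x ∂μ01, (T f) x = (x : ℂ) * f (Int.fract (x + α))

/-- `T` is the weighted translation operator `T_{φ,α}` on `L^p([0,1])`, i.e.
`(T f)(x) = φ(x) · f({x + α})` for a.e. `x ∈ [0,1]`. -/
def IsWTOp (p : ℝ≥0∞) [Fact (1 ≤ p)] (φ : ℝ → ℂ) (α : ℝ)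
    (T : Lp ℂ p μ01 →L[ℂ] Lp ℂ p μ01) : Prop :=
  ∀ f : Lp ℂ p μ01, ∀ᵐ x ∂μ01, (T f) x = φ x * f (Int.fract (x + α))


lemma fract_key (α : ℝ) {x : ℝ} (hx : x ∈ Set.Ico (0:ℝ) 1) :
    Int.fract (x + α) =
      if x + Int.fract α < 1 then x + Int.fract α else x + Int.fract α - 1 := by
  set β := Int.fract α with hβdef
  have h1 : Int.fract (x + α) = Int.fract (x + β) := by
    have : x + α = (x + β) + (⌊α⌋ : ℤ) := by
      rw [hβdef, Int.fract]; ring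
    rw [this, Int.fract_add_intCast]
  rw [h1]
  have hβ0 : 0 ≤ β := Int.fract_nonneg α
  have hβ1 : β < 1 := Int.fract_lt_one α
  by_cases hlt : x + β < 1
  · rw [if_pos hlt, Int.fract_eq_self.mpr ⟨by linarith [hx.1], hlt⟩]
  · rw [if_neg hlt]
    have : Int.fract (x + β) = Int.fract (x + β - (1:ℤ)) := (Int.fract_sub_intCast _ _).symm
    rw [this]
    push_cast
    exact Int.fract_eq_self.mpr ⟨by push_cast at this ⊢; linarith, by linarith [hx.2]⟩

lemma fract_mp (α : ℝ) :
    MeasurePreserving (fun x => Int.fract (x + α))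
      (volume.restrict (Set.Ico (0:ℝ) 1)) (volume.restrict (Set.Ico (0:ℝ) 1)) := by
  set β := Int.fract α with hβdef
  have hβ0 : 0 ≤ β := Int.fract_nonneg α
  have hβ1 : β < 1 := Int.fract_lt_one α
  have hmeas : Measurable fun x : ℝ => Int.fract (x + α) :=
    measurable_fract.comp (measurable_add_const α)
  refine ⟨hmeas, ?_⟩
  refine Measure.ext fun s hs => ?_
  rw [Measure.map_apply hmeas hs, Measure.restrict_apply hs,
      Measure.restrict_apply (hmeas hs)]
  have hsplit : (fun x => Int.fract (x + α)) ⁻¹' s ∩ Set.Ico 0 1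
      = ((fun x => x + β) ⁻¹' (s ∩ Set.Ico β 1))
        ∪ ((fun x => x + (β - 1)) ⁻¹' (s ∩ Set.Ico 0 β)) := by
    ext x
    simp only [Set.mem_inter_iff, Set.mem_union, Set.mem_preimage, Set.mem_Ico]
    constructor
    · rintro ⟨hxs, hx0, hx1⟩
      rw [fract_key α ⟨hx0, hx1⟩] at hxs
      by_cases hlt : x + β < 1
      · rw [if_pos hlt] at hxs
        exact Or.inl ⟨hxs, by linarith, hlt⟩
      · rw [if_neg hlt] at hxs
        refine Or.inr ⟨?_, by linarith, by linarith⟩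
        have hxe : x + (β - 1) = x + β - 1 := by ring
        rw [hxe]; exact hxs
    · rintro (⟨hxs, hβx, hx1⟩ | ⟨hxs, hx0, hxβ⟩)
      · have hx : x ∈ Set.Ico (0:ℝ) 1 := ⟨by linarith, by linarith⟩
        refine ⟨?_, hx⟩
        rw [fract_key α hx, if_pos hx1]; exact hxs
      · have hx : x ∈ Set.Ico (0:ℝ) 1 := ⟨by linarith, by linarith⟩
        refine ⟨?_, hx⟩
        rw [fract_key α hx, if_neg (by linarith)]
        have : x + β - 1 = x + (β - 1) := by ring
        rw [this]; exact hxs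
  rw [hsplit]
  have hd : Disjoint ((fun x => x + β) ⁻¹' (s ∩ Set.Ico β 1))
      ((fun x => x + (β - 1)) ⁻¹' (s ∩ Set.Ico 0 β)) := by
    rw [Set.disjoint_left]
    rintro x ⟨-, -, h1⟩ ⟨-, h2, -⟩
    simp only at h1 h2
    linarith
  have hm2 : MeasurableSet ((fun x => x + (β - 1)) ⁻¹' (s ∩ Set.Ico 0 β)) :=
    (measurable_add_const _) (hs.inter measurableSet_Ico)
  rw [measure_union hd hm2, measure_preimage_add_right, measure_preimage_add_right]
  have : s ∩ Set.Ico 0 1 = (s ∩ Set.Ico β 1) ∪ (s ∩ Set.Ico 0 β) := by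
    rw [← Set.inter_union_distrib_left, Set.union_comm, Set.Ico_union_Ico_eq_Ico hβ0 hβ1.le]
  rw [this, measure_union ?_ (hs.inter measurableSet_Ico)]
  · rw [Set.disjoint_left]
    rintro x ⟨-, h1, -⟩ ⟨-, -, h2⟩
    linarith

instance : IsProbabilityMeasure μ01 := by
  constructor
  simp [μ01, Real.volume_Icc]

lemma μ01_eq_Ico : μ01 = volume.restrict (Set.Ico (0:ℝ) 1) := by
  rw [μ01]
  exact (Measure.restrict_congr_set Ico_ae_eq_Icc).symm

theorem weighted_translation_not_hypercyclic (p : ℝ≥0∞) [Fact (1 ≤ p)]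
    (hp : 1 < p) (hp' : p ≠ ∞)
    (φ : ℝ → ℂ) (hφ : MemLp φ ⊤ μ01)
    (α : ℝ) (hα : α ∈ Set.Icc (0 : ℝ) 1)
    (hsmall : eLpNorm φ ⊤ μ01 ≤ 1 ∨ 0 < μ01 {x | φ x = 0})
    (T : Lp ℂ p μ01 →L[ℂ] Lp ℂ p μ01) (hT : IsWTOp p φ α T) :
    ¬ ∃ f : Lp ℂ p μ01, Dense (Set.range fun n : ℕ => (T ^ n) f) := by
  rintro ⟨f, hf⟩
  have hp0 : p ≠ 0 := (zero_lt_one.trans hp).ne'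
  suffices hsep : ∃ g : Lp ℂ p μ01, ∀ n : ℕ, 1 ≤ dist g ((T ^ n) f) by
    obtain ⟨g, hg⟩ := hsep
    obtain ⟨y, hy1, hy2⟩ := hf.exists_dist_lt g one_pos
    obtain ⟨n, rfl⟩ := hy1
    exact absurd hy2 (not_lt.mpr (hg n))
  rcases hsmall with hsmall | hsmall
  · -- Case 1 : contraction
    have hmp : MeasurePreserving (fun x => Int.fract (x + α)) μ01 μ01 := by
      rw [μ01_eq_Ico]; exact fract_mp α
    have hφle : ∀ᵐ x ∂μ01, ‖φ x‖ ≤ 1 := by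
      have h1 : ∀ᵐ x ∂μ01, (‖φ x‖₊ : ℝ≥0∞) ≤ eLpNormEssSup φ μ01 :=
        enorm_ae_le_eLpNormEssSup φ μ01
      have h2 : eLpNormEssSup φ μ01 ≤ 1 := by
        rwa [eLpNorm_exponent_top] at hsmall
      filter_upwards [h1] with x hx
      have h3 : (‖φ x‖₊ : ℝ≥0∞) ≤ 1 := hx.trans h2
      rw [← ENNReal.coe_one, ENNReal.coe_le_coe] at h3
      have h3' := NNReal.coe_le_coe.mpr h3
      simpa using h3'
    have hcontr : ∀ g : Lp ℂ p μ01, ‖T g‖ ≤ ‖g‖ := by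
      intro g
      have e1 : eLpNorm (⇑(T g)) p μ01
          = eLpNorm (fun x => φ x * g (Int.fract (x + α))) p μ01 :=
        eLpNorm_congr_ae (hT g)
      have e2 : eLpNorm (fun x => φ x * g (Int.fract (x + α))) p μ01
          ≤ eLpNorm (fun x => g (Int.fract (x + α))) p μ01 := by
        refine eLpNorm_mono_ae ?_
        filter_upwards [hφle] with x hx
        rw [norm_mul]
        calc ‖φ x‖ * ‖g (Int.fract (x + α))‖
            ≤ 1 * ‖g (Int.fract (x + α))‖ :=
              mul_le_mul_of_nonneg_right hx (norm_nonneg _)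
          _ = ‖g (Int.fract (x + α))‖ := one_mul _
      have e3 : eLpNorm (fun x => g (Int.fract (x + α))) p μ01 = eLpNorm (⇑g) p μ01 := by
        exact
          eLpNorm_comp_measurePreserving (p := p) (Lp.aestronglyMeasurable g) hmp
      rw [Lp.norm_def, Lp.norm_def]
      refine ENNReal.toReal_mono (Lp.eLpNorm_ne_top g) ?_
      rw [e1]
      exact e2.trans e3.le
    have horb : ∀ n : ℕ, ‖(T ^ n) f‖ ≤ ‖f‖ := by
      intro n
      induction n with
      | zero => simp
      | succ n ih =>
        rw [pow_succ']
        calc ‖(T * T ^ n) f‖ = ‖T ((T ^ n) f)‖ := rfl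
          _ ≤ ‖(T ^ n) f‖ := hcontr _
          _ ≤ ‖f‖ := ih
    set c : ℂ := ((‖f‖ + 2 : ℝ) : ℂ) with hc
    have hcmem : MemLp (fun _ : ℝ => c) p μ01 := memLp_const c
    refine ⟨hcmem.toLp _, fun n => ?_⟩
    have hgnorm : ‖hcmem.toLp _‖ = ‖f‖ + 2 := by
      rw [Lp.norm_toLp, eLpNorm_const c hp0 (IsProbabilityMeasure.ne_zero μ01)]
      have hcn : ‖c‖ = ‖f‖ + 2 := by
        rw [hc, Complex.norm_real, Real.norm_eq_abs,
          abs_of_nonneg (by positivity : (0:ℝ) ≤ ‖f‖ + 2)]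
      simp [measure_univ, hcn]
    rw [dist_eq_norm]
    calc (1 : ℝ) ≤ ‖hcmem.toLp _‖ - ‖(T ^ n) f‖ := by
          rw [hgnorm]; linarith [horb n]
      _ ≤ ‖hcmem.toLp _ - (T ^ n) f‖ := norm_sub_norm_le _ _
  · -- Case 2 : φ vanishes on a set of positive measure
    set ψ := hφ.aestronglyMeasurable.mk φ with hψdef
    have hφψ : φ =ᵐ[μ01] ψ := hφ.aestronglyMeasurable.ae_eq_mk
    set A : Set ℝ := {x | ψ x = 0} with hAdef
    have hAm : MeasurableSet A :=
      hφ.aestronglyMeasurable.stronglyMeasurable_mk.measurable (measurableSet_singleton 0)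
    have hApos : 0 < μ01 A := by
      refine hsmall.trans_le (measure_mono_ae ?_)
      filter_upwards [hφψ] with x hx h
      have hx0 : φ x = 0 := h
      show ψ x = 0
      rwa [hx] at hx0
    have hAfin : μ01 A ≠ ∞ := (measure_lt_top μ01 A).ne
    set h : Lp ℂ p μ01 := indicatorConstLp p hAm hAfin (1 : ℂ) with hhdef
    set ν : Measure ℝ := μ01.restrict A with hν
    have hvan : ∀ g : Lp ℂ p μ01, (⇑(T g)) =ᵐ[ν] 0 := by
      intro g
      filter_upwards [ae_restrict_of_ae (hT g), ae_restrict_of_ae hφψ,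
        ae_restrict_mem hAm] with x h1 h2 h3
      rw [Pi.zero_apply, h1, h2, show ψ x = 0 from h3, zero_mul]
    have hfinν : ∀ u : Lp ℂ p μ01, eLpNorm (⇑u) p ν ≠ ∞ := fun u =>
      ((eLpNorm_mono_measure _ Measure.restrict_le_self).trans_lt
        (Lp.eLpNorm_lt_top u)).ne
    set N : Lp ℂ p μ01 → ℝ := fun u => (eLpNorm (⇑u) p ν).toReal with hNdef
    have hNle : ∀ u : Lp ℂ p μ01, N u ≤ ‖u‖ := by
      intro u
      rw [Lp.norm_def]
      exact ENNReal.toReal_mono (Lp.eLpNorm_ne_top u)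
        (eLpNorm_mono_measure _ Measure.restrict_le_self)
    have hh1 : (⇑h) =ᵐ[ν] fun _ => (1 : ℂ) := by
      filter_upwards [ae_restrict_of_ae (indicatorConstLp_coeFn (p := p) (hs := hAm) (hμs := hAfin) (c := (1:ℂ))), ae_restrict_mem hAm]
        with x h1 h2
      rw [h1, Set.indicator_of_mem h2]
    have hcpos : 0 < N h := by
      have hν0 : ν ≠ 0 := by
        rw [hν, Ne, Measure.restrict_eq_zero]
        exact hApos.ne'
      have hνuniv : ν Set.univ = μ01 A := by rw [hν, Measure.restrict_apply_univ]
      have hppos : (0:ℝ) < 1 / p.toReal := by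
        have := ENNReal.toReal_pos hp0 hp'
        positivity
      have : N h = (((1:ℝ≥0∞)) * ν Set.univ ^ (1 / p.toReal)).toReal := by
        rw [hNdef]
        simp only
        rw [eLpNorm_congr_ae hh1, eLpNorm_const (1 : ℂ) hp0 hν0]
        norm_num
      rw [this, hνuniv]
      refine ENNReal.toReal_pos ?_ ?_
      · simp only [one_mul, ne_eq]
        exact (ENNReal.rpow_pos hApos hAfin).ne'
      · simp only [one_mul]
        exact ENNReal.rpow_ne_top_of_nonneg hppos.le hAfin
    obtain ⟨r, hr⟩ := exists_nat_gt ((N f + 1) / N h)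
    have hrc : N f + 1 < r * N h := by
      rwa [div_lt_iff₀ hcpos] at hr
    set g : Lp ℂ p μ01 := f + (r : ℂ) • h with hg
    have hgf : g - f = (r : ℂ) • h := by rw [hg]; abel
    refine ⟨g, fun n => ?_⟩
    have hNf0 : 0 ≤ N f := ENNReal.toReal_nonneg
    have hkey : (r : ℝ) * N h ≤ N g + N f := by
      have e1 : eLpNorm (⇑((r : ℂ) • h)) p ν = (r : ℝ≥0∞) * eLpNorm (⇑h) p ν := by
        rw [eLpNorm_congr_ae (ae_restrict_of_ae (Lp.coeFn_smul ((r : ℂ)) h)),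
          eLpNorm_const_smul]
        norm_num
        rw [← ofReal_norm_eq_enorm, Complex.norm_natCast, ENNReal.ofReal_natCast]
      have e2 : eLpNorm (⇑((r : ℂ) • h)) p ν ≤ eLpNorm (⇑g) p ν + eLpNorm (⇑f) p ν := by
        have hsub0 : (⇑(g - f)) =ᵐ[ν] (⇑g - ⇑f) := ae_restrict_of_ae (Lp.coeFn_sub g f)
        have hsub : (⇑((r : ℂ) • h)) =ᵐ[ν] (⇑g - ⇑f) := hgf ▸ hsub0
        rw [eLpNorm_congr_ae hsub]
        exact eLpNorm_sub_le ((Lp.aestronglyMeasurable g).restrict)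
          ((Lp.aestronglyMeasurable f).restrict) (Fact.out : 1 ≤ p)
      rw [e1] at e2
      have h4 := ENNReal.toReal_mono
        (ENNReal.add_ne_top.mpr ⟨hfinν g, hfinν f⟩) e2
      rw [ENNReal.toReal_add (hfinν g) (hfinν f), ENNReal.toReal_mul] at h4
      simpa [hNdef] using h4
    rcases n with _ | n
    · rw [pow_zero, ContinuousLinearMap.one_apply, dist_eq_norm, hgf, norm_smul]
      have hrr : ‖((r : ℂ))‖ = (r : ℝ) := by simp
      rw [hrr]
      have hNh : N h ≤ ‖h‖ := hNle h
      nlinarith [hcpos, hNf0, norm_nonneg h]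
    · have hvn : (⇑((T ^ (n + 1)) f)) =ᵐ[ν] 0 := by
        have hps : (T ^ (n + 1)) f = T ((T ^ n) f) := by rw [pow_succ']; rfl
        rw [hps]
        exact hvan _
      have hNgu : N (g - (T ^ (n + 1)) f) = N g := by
        rw [hNdef]
        simp only
        refine congrArg ENNReal.toReal (eLpNorm_congr_ae ?_)
        filter_upwards [ae_restrict_of_ae (Lp.coeFn_sub g ((T ^ (n + 1)) f)), hvn]
          with x h1 h2
        rw [h1, Pi.sub_apply, h2, Pi.zero_apply, sub_zero]
      have hfin : (1 : ℝ) ≤ N (g - (T ^ (n + 1)) f) := by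
        rw [hNgu]
        linarith [hkey, hNf0]
      calc (1 : ℝ) ≤ N (g - (T ^ (n + 1)) f) := hfin
        _ ≤ ‖g - (T ^ (n + 1)) f‖ := hNle _
        _ = dist g ((T ^ (n + 1)) f) := (dist_eq_norm _ _).symm
end

section
/- Let φ ∈ L^∞([0,1]), α ∈ [0,1] and 1 < p < ∞. The weighted translation operator T = T_{φ,α} on X = L^p([0,1]) does not satisfy the Hypercyclicity Criterion: there do not exist dense subsets X₀ and Y₀ of X, a strictly increasing sequence (n_k) of positive integers, and maps S_{n_k} : Y₀ → X such that (i) T^{n_k} x → 0 as k → ∞ for every x ∈ X₀, (ii) S_{n_k} y → 0 as k → ∞ for every y ∈ Y₀, and (iii) T^{n_k} S_{n_k} y → y as k → ∞ for every y ∈ Y₀. -/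
open MeasureTheory Set Filter Topology Polynomial
open scoped ENNReal NNReal

instance inst_s2 : IsProbabilityMeasure μ01 := by
  constructor
  rw [μ01, Measure.restrict_apply_univ, Real.volume_Icc]
  norm_num

namespace WTaux

/-- Translation by `α` modulo 1. -/
noncomputable def τ (α : ℝ) : ℝ → ℝ := fun x => Int.fract (x + α)

lemma measurable_τ (α : ℝ) : Measurable (τ α) :=
  measurable_fract.comp (measurable_id.add_const α)

lemma volume_inter_Icc (S : Set ℝ) :
    volume (S ∩ Icc 0 1) = volume (S ∩ Ico 0 1) := by
  apply le_antisymm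
  · calc volume (S ∩ Icc 0 1) ≤ volume ((S ∩ Ico 0 1) ∪ {1}) := by
          apply measure_mono
          rintro x ⟨hS, h0, h1⟩
          rcases lt_or_eq_of_le h1 with h | h
          · exact Or.inl ⟨hS, h0, h⟩
          · exact Or.inr h
    _ ≤ volume (S ∩ Ico 0 1) + volume ({1} : Set ℝ) := measure_union_le _ _
    _ = volume (S ∩ Ico 0 1) := by simp
  · exact measure_mono (inter_subset_inter_right _ Ico_subset_Icc_self)

lemma mp_τ {α : ℝ} (hα : α ∈ Icc (0:ℝ) 1) : MeasurePreserving (τ α) μ01 μ01 := by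
  obtain ⟨hα0, hα1⟩ := hα
  refine ⟨measurable_τ α, ?_⟩
  ext A hA
  rw [Measure.map_apply (measurable_τ α) hA, μ01, Measure.restrict_apply hA,
    Measure.restrict_apply ((measurable_τ α) hA), volume_inter_Icc, volume_inter_Icc]
  have hset : τ α ⁻¹' A ∩ Ico 0 1 =
      ((fun x => x + α) ⁻¹' (A ∩ Ico α 1)) ∪ ((fun x => x + (α - 1)) ⁻¹' (A ∩ Ico 0 α)) := by
    ext x
    simp only [mem_inter_iff, mem_preimage, mem_union, mem_Ico, τ]
    constructor
    · rintro ⟨hxA, hx0, hx1⟩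
      rcases lt_or_ge (x + α) 1 with h | h
      · left
        have hf : Int.fract (x + α) = x + α := Int.fract_eq_self.mpr ⟨by linarith, h⟩
        rw [hf] at hxA
        exact ⟨hxA, by linarith, h⟩
      · right
        have hf : Int.fract (x + α) = x + (α - 1) := by
          have h2 : Int.fract (x + α - (1:ℤ)) = Int.fract (x + α) := Int.fract_sub_intCast _ _
          rw [← h2]
          push_cast
          have : x + α - 1 = x + (α - 1) := by ring
          rw [this]
          exact Int.fract_eq_self.mpr ⟨by linarith, by linarith⟩
        rw [hf] at hxA
        exact ⟨hxA, by linarith, by linarith⟩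
    · rintro (⟨hxA, h1, h2⟩ | ⟨hxA, h1, h2⟩)
      · have hf : Int.fract (x + α) = x + α := Int.fract_eq_self.mpr ⟨by linarith, h2⟩
        rw [hf]
        exact ⟨hxA, by linarith, by linarith⟩
      · have hf : Int.fract (x + α) = x + (α - 1) := by
          have h3 : Int.fract (x + α - (1:ℤ)) = Int.fract (x + α) := Int.fract_sub_intCast _ _
          rw [← h3]
          push_cast
          have : x + α - 1 = x + (α - 1) := by ring
          rw [this]
          exact Int.fract_eq_self.mpr ⟨by linarith, by linarith⟩
        rw [hf]
        exact ⟨hxA, by linarith, by linarith⟩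
  rw [hset]
  have hmA2 : MeasurableSet (A ∩ Ico 0 α) := hA.inter measurableSet_Ico
  have hmA1 : MeasurableSet (A ∩ Ico α 1) := hA.inter measurableSet_Ico
  have hd : Disjoint ((fun x : ℝ => x + α) ⁻¹' (A ∩ Ico α 1))
      ((fun x : ℝ => x + (α - 1)) ⁻¹' (A ∩ Ico 0 α)) := by
    rw [Set.disjoint_left]
    rintro x ⟨_, _, h1⟩ ⟨_, h2, _⟩
    dsimp only at h1 h2
    linarith
  rw [measure_union hd ((measurable_id.add_const (α - 1)) hmA2),
    measure_preimage_add_right, measure_preimage_add_right]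
  have hsplit : A ∩ Ico 0 1 = (A ∩ Ico 0 α) ∪ (A ∩ Ico α 1) := by
    rw [← inter_union_distrib_left, Ico_union_Ico_eq_Ico hα0 hα1]
  rw [hsplit, measure_union ?_ hmA1, add_comm]
  rw [Set.disjoint_left]
  rintro x ⟨_, _, h1⟩ ⟨_, h2, _⟩
  linarith

/-- The iterate formula for powers of a weighted translation operator. -/
lemma pow_formula {p : ℝ≥0∞} [Fact (1 ≤ p)] {φ : ℝ → ℂ} {α : ℝ}
    {T : Lp ℂ p μ01 →L[ℂ] Lp ℂ p μ01} (hT : IsWTOp p φ α T)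
    (hα : α ∈ Icc (0:ℝ) 1) (n : ℕ) :
    ∀ f : Lp ℂ p μ01, ∀ᵐ x ∂μ01,
      ((T ^ n) f) x = (∏ j ∈ Finset.range n, φ ((τ α)^[j] x)) * f ((τ α)^[n] x) := by
  induction n with
  | zero =>
      intro f
      refine Eventually.of_forall fun x => ?_
      simp [pow_zero, ContinuousLinearMap.one_apply]
  | succ n ih =>
      intro f
      have hmp := (mp_τ hα).iterate n
      have h1 : ((T ^ (n + 1)) f) = (T ^ n) (T f) := by
        rw [pow_succ, ContinuousLinearMap.mul_apply]
      have h3 : ∀ᵐ x ∂μ01,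
          (T f) ((τ α)^[n] x) = φ ((τ α)^[n] x) * f ((τ α) ((τ α)^[n] x)) := by
        have h4 := hmp.quasiMeasurePreserving.ae_eq_comp (hT f)
        filter_upwards [h4] with x hx using hx
      filter_upwards [ih (T f), h3] with x hx1 hx2
      rw [h1, hx1, hx2, Finset.prod_range_succ, Function.iterate_succ_apply' (τ α) n x]
      ring

/-- The basic bilinear quantity. -/
noncomputable def Dq (s : ℝ) (e : ℝ → ℝ) (F G : ℝ → ℂ) : ℝ≥0∞ :=
  ∫⁻ x, (‖F x‖₊ : ℝ≥0∞) ^ s * (‖G (e x)‖₊ : ℝ≥0∞) ^ s ∂μ01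

lemma aemeas_fst {s : ℝ} {F : ℝ → ℂ} (hF : AEStronglyMeasurable F μ01) :
    AEMeasurable (fun x => (‖F x‖₊ : ℝ≥0∞) ^ s) μ01 :=
  ENNReal.continuous_rpow_const.measurable.comp_aemeasurable hF.enorm

lemma aemeas_snd {s : ℝ} {G : ℝ → ℂ} (hG : AEStronglyMeasurable G μ01)
    {e : ℝ → ℝ} (he : MeasurePreserving e μ01 μ01) :
    AEMeasurable (fun x => (‖G (e x)‖₊ : ℝ≥0∞) ^ s) μ01 :=
  (ENNReal.continuous_rpow_const.measurable.comp_aemeasurable hG.enorm).comp_quasiMeasurePreserving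
    he.quasiMeasurePreserving

/-- Cauchy–Schwarz bound for `Dq`. -/
lemma Dq_le_CS {p : ℝ≥0∞} (hp0 : p ≠ 0) (hp' : p ≠ ∞) (hr : 0 < p.toReal)
    {s : ℝ} (hs : s = p.toReal / 2)
    {F G : ℝ → ℂ} (hF : AEStronglyMeasurable F μ01) (hG : AEStronglyMeasurable G μ01)
    {e : ℝ → ℝ} (he : MeasurePreserving e μ01 μ01) :
    Dq s e F G ≤ eLpNorm F p μ01 ^ s * eLpNorm G p μ01 ^ s := by
  set r := p.toReal with hrdef
  have h22 : (2:ℝ).HolderConjugate 2 := Real.holderConjugate_iff.mpr ⟨one_lt_two, by norm_num⟩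
  have hH := ENNReal.lintegral_mul_le_Lp_mul_Lq μ01 h22 (aemeas_fst hF (s := s))
    (aemeas_snd hG he (s := s))
  have hs2 : s * 2 = r := by rw [hs]; ring
  have hFfac : (∫⁻ x, ((‖F x‖₊ : ℝ≥0∞) ^ s) ^ (2:ℝ) ∂μ01) ^ (1/(2:ℝ))
      = eLpNorm F p μ01 ^ s := by
    simp only [← ENNReal.rpow_mul, hs2]
    rw [eLpNorm_eq_lintegral_rpow_enorm_toReal hp0 hp', ← ENNReal.rpow_mul]
    congr 1
    rw [hs, ← hrdef]
    field_simp [hr.ne']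
  have hGmp : (∫⁻ x, (‖G (e x)‖₊ : ℝ≥0∞) ^ r ∂μ01)
      = ∫⁻ y, (‖G y‖₊ : ℝ≥0∞) ^ r ∂μ01 := by
    conv_rhs => rw [← he.map_eq]
    rw [lintegral_map' (by
      rw [he.map_eq]
      exact ENNReal.continuous_rpow_const.measurable.comp_aemeasurable hG.enorm)
      he.measurable.aemeasurable]
  have hGfac : (∫⁻ x, ((‖G (e x)‖₊ : ℝ≥0∞) ^ s) ^ (2:ℝ) ∂μ01) ^ (1/(2:ℝ))
      = eLpNorm G p μ01 ^ s := by
    simp only [← ENNReal.rpow_mul, hs2]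
    rw [hGmp, eLpNorm_eq_lintegral_rpow_enorm_toReal hp0 hp', ← ENNReal.rpow_mul]
    congr 1
    rw [hs, ← hrdef]
    field_simp [hr.ne']
  calc Dq s e F G
      = ∫⁻ x, ((fun x => (‖F x‖₊ : ℝ≥0∞) ^ s) * fun x => (‖G (e x)‖₊ : ℝ≥0∞) ^ s) x ∂μ01 := rfl
    _ ≤ (∫⁻ x, ((‖F x‖₊ : ℝ≥0∞) ^ s) ^ (2:ℝ) ∂μ01) ^ (1/(2:ℝ))
        * (∫⁻ x, ((‖G (e x)‖₊ : ℝ≥0∞) ^ s) ^ (2:ℝ) ∂μ01) ^ (1/(2:ℝ)) := hH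
    _ = eLpNorm F p μ01 ^ s * eLpNorm G p μ01 ^ s := by rw [hFfac, hGfac]

lemma rpow_add_le {x y z : ℝ≥0∞} (h : x ≤ y + z) {s : ℝ} (hs : 0 ≤ s) :
    x ^ s ≤ 2 ^ s * (y ^ s + z ^ s) := by
  have h1 : x ^ s ≤ (2 * (y ⊔ z)) ^ s := by
    refine ENNReal.rpow_le_rpow (h.trans ?_) hs
    rw [two_mul]
    exact add_le_add le_sup_left le_sup_right
  rw [ENNReal.mul_rpow_of_nonneg _ _ hs] at h1
  refine h1.trans (mul_le_mul_right ?_ _)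
  rcases le_total y z with h' | h'
  · rw [sup_eq_right.mpr h']; exact le_add_self
  · rw [sup_eq_left.mpr h']; exact self_le_add_right _ _

lemma Dq_perturb_left {s : ℝ} (hs : 0 ≤ s) (e : ℝ → ℝ) {F F' : ℝ → ℂ} (G : ℝ → ℂ)
    (hF' : AEStronglyMeasurable F' μ01) (hG : AEStronglyMeasurable G μ01)
    (he : MeasurePreserving e μ01 μ01) :
    Dq s e F G ≤ 2 ^ s * (Dq s e F' G + Dq s e (F - F') G) := by
  have hpt : ∀ x, (‖F x‖₊ : ℝ≥0∞) ^ s * (‖G (e x)‖₊ : ℝ≥0∞) ^ s ≤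
      2 ^ s * ((‖F' x‖₊ : ℝ≥0∞) ^ s * (‖G (e x)‖₊ : ℝ≥0∞) ^ s
        + (‖(F - F') x‖₊ : ℝ≥0∞) ^ s * (‖G (e x)‖₊ : ℝ≥0∞) ^ s) := by
    intro x
    have hx : (‖F x‖₊ : ℝ≥0∞) ≤ (‖F' x‖₊ : ℝ≥0∞) + (‖(F - F') x‖₊ : ℝ≥0∞) := by
      have h0 : ‖F x‖₊ ≤ ‖F' x‖₊ + ‖F x - F' x‖₊ := by
        simpa using nnnorm_add_le (F' x) (F x - F' x)
      simp only [Pi.sub_apply]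
      exact_mod_cast h0
    calc (‖F x‖₊ : ℝ≥0∞) ^ s * (‖G (e x)‖₊ : ℝ≥0∞) ^ s
        ≤ (2 ^ s * ((‖F' x‖₊ : ℝ≥0∞) ^ s + (‖(F - F') x‖₊ : ℝ≥0∞) ^ s))
          * (‖G (e x)‖₊ : ℝ≥0∞) ^ s := mul_le_mul_left (rpow_add_le hx hs) _
      _ = 2 ^ s * ((‖F' x‖₊ : ℝ≥0∞) ^ s * (‖G (e x)‖₊ : ℝ≥0∞) ^ s
          + (‖(F - F') x‖₊ : ℝ≥0∞) ^ s * (‖G (e x)‖₊ : ℝ≥0∞) ^ s) := by ring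
  calc Dq s e F G
      ≤ ∫⁻ x, 2 ^ s * ((‖F' x‖₊ : ℝ≥0∞) ^ s * (‖G (e x)‖₊ : ℝ≥0∞) ^ s
          + (‖(F - F') x‖₊ : ℝ≥0∞) ^ s * (‖G (e x)‖₊ : ℝ≥0∞) ^ s) ∂μ01 :=
        lintegral_mono hpt
    _ = 2 ^ s * (Dq s e F' G + Dq s e (F - F') G) := by
        rw [lintegral_const_mul' _ _ (ENNReal.rpow_ne_top_of_nonneg hs (by norm_num)),
          lintegral_add_left' (f := fun x => (‖F' x‖₊ : ℝ≥0∞) ^ s * (‖G (e x)‖₊ : ℝ≥0∞) ^ s) ((aemeas_fst hF' (s := s)).mul (aemeas_snd hG he (s := s)))]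
        rfl

lemma Dq_perturb_right {s : ℝ} (hs : 0 ≤ s) (e : ℝ → ℝ) (F : ℝ → ℂ) {G G' : ℝ → ℂ}
    (hF : AEStronglyMeasurable F μ01) (hG' : AEStronglyMeasurable G' μ01)
    (he : MeasurePreserving e μ01 μ01) :
    Dq s e F G ≤ 2 ^ s * (Dq s e F G' + Dq s e F (G - G')) := by
  have hpt : ∀ x, (‖F x‖₊ : ℝ≥0∞) ^ s * (‖G (e x)‖₊ : ℝ≥0∞) ^ s ≤
      2 ^ s * ((‖F x‖₊ : ℝ≥0∞) ^ s * (‖G' (e x)‖₊ : ℝ≥0∞) ^ s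
        + (‖F x‖₊ : ℝ≥0∞) ^ s * (‖(G - G') (e x)‖₊ : ℝ≥0∞) ^ s) := by
    intro x
    have hx : (‖G (e x)‖₊ : ℝ≥0∞) ≤ (‖G' (e x)‖₊ : ℝ≥0∞) + (‖(G - G') (e x)‖₊ : ℝ≥0∞) := by
      have h0 : ‖G (e x)‖₊ ≤ ‖G' (e x)‖₊ + ‖G (e x) - G' (e x)‖₊ := by
        simpa using nnnorm_add_le (G' (e x)) (G (e x) - G' (e x))
      simp only [Pi.sub_apply]
      exact_mod_cast h0
    calc (‖F x‖₊ : ℝ≥0∞) ^ s * (‖G (e x)‖₊ : ℝ≥0∞) ^ s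
        ≤ (‖F x‖₊ : ℝ≥0∞) ^ s
          * (2 ^ s * ((‖G' (e x)‖₊ : ℝ≥0∞) ^ s + (‖(G - G') (e x)‖₊ : ℝ≥0∞) ^ s)) :=
          mul_le_mul_right (rpow_add_le hx hs) _
      _ = 2 ^ s * ((‖F x‖₊ : ℝ≥0∞) ^ s * (‖G' (e x)‖₊ : ℝ≥0∞) ^ s
          + (‖F x‖₊ : ℝ≥0∞) ^ s * (‖(G - G') (e x)‖₊ : ℝ≥0∞) ^ s) := by ring
  calc Dq s e F G
      ≤ ∫⁻ x, 2 ^ s * ((‖F x‖₊ : ℝ≥0∞) ^ s * (‖G' (e x)‖₊ : ℝ≥0∞) ^ s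
          + (‖F x‖₊ : ℝ≥0∞) ^ s * (‖(G - G') (e x)‖₊ : ℝ≥0∞) ^ s) ∂μ01 :=
        lintegral_mono hpt
    _ = 2 ^ s * (Dq s e F G' + Dq s e F (G - G')) := by
        rw [lintegral_const_mul' _ _ (ENNReal.rpow_ne_top_of_nonneg hs (by norm_num)),
          lintegral_add_left' (f := fun x => (‖F x‖₊ : ℝ≥0∞) ^ s * (‖G' (e x)‖₊ : ℝ≥0∞) ^ s) ((aemeas_fst hF (s := s)).mul (aemeas_snd hG' he (s := s)))]
        rfl

/-- The fundamental symmetry of weighted translations. -/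
lemma Dq_swap {p : ℝ≥0∞} [Fact (1 ≤ p)] {φ : ℝ → ℂ} {α : ℝ}
    {T : Lp ℂ p μ01 →L[ℂ] Lp ℂ p μ01} (hT : IsWTOp p φ α T)
    (hα : α ∈ Icc (0:ℝ) 1) {s : ℝ} (hs : 0 ≤ s) (n : ℕ) (f g : Lp ℂ p μ01) :
    Dq s ((τ α)^[n]) (⇑((T ^ n) f)) ⇑g = Dq s ((τ α)^[n]) (⇑((T ^ n) g)) ⇑f := by
  apply lintegral_congr_ae
  filter_upwards [pow_formula hT hα n f, pow_formula hT hα n g] with x e1 e2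
  rw [e1, e2]
  simp only [nnnorm_mul, ENNReal.coe_mul, ENNReal.mul_rpow_of_nonneg _ _ hs]
  ring

lemma Dq_one {s : ℝ} {e : ℝ → ℝ} (he : MeasurePreserving e μ01 μ01) {c : ℝ → ℂ}
    (hc : c =ᵐ[μ01] fun _ => 1) : Dq s e c c = 1 := by
  have hc2 : (fun x => c (e x)) =ᵐ[μ01] fun _ => (1:ℂ) := by
    have h0 := he.quasiMeasurePreserving.ae_eq_comp hc
    filter_upwards [h0] with x hx using hx
  have h : Dq s e c c = ∫⁻ _, 1 ∂μ01 := by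
    apply lintegral_congr_ae
    filter_upwards [hc, hc2] with x h1 h2
    simp [Dq, h1, h2, ENNReal.one_rpow]
  rw [h, lintegral_one, measure_univ]

end WTaux

open WTaux

/-- The weighted translation operator `T = T_{φ,α}` on `L^p([0,1])` does not
satisfy the Hypercyclicity Criterion: there do not exist dense subsets `X₀, Y₀`, a strictly
increasing sequence `(n_k)` of positive integers, and maps `S_{n_k} : Y₀ → X` such that
`T^{n_k} x → 0` on `X₀`, `S_{n_k} y → 0` on `Y₀` and `T^{n_k} S_{n_k} y → y` on `Y₀`. -/
theorem weighted_translation_not_hypercyclicity_criterion (p : ℝ≥0∞) [Fact (1 ≤ p)]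
    (hp : 1 < p) (hp' : p ≠ ∞)
    (φ : ℝ → ℂ) (hφ : MemLp φ ⊤ μ01)
    (α : ℝ) (hα : α ∈ Set.Icc (0 : ℝ) 1)
    (T : Lp ℂ p μ01 →L[ℂ] Lp ℂ p μ01) (hT : IsWTOp p φ α T) :
    ¬ ∃ (X₀ Y₀ : Set (Lp ℂ p μ01)) (n : ℕ → ℕ)
        (S : ℕ → Lp ℂ p μ01 → Lp ℂ p μ01),
      Dense X₀ ∧ Dense Y₀ ∧ StrictMono n ∧ (∀ k, 0 < n k) ∧
      (∀ x ∈ X₀, Tendsto (fun k => (T ^ n k) x) atTop (𝓝 0)) ∧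
      (∀ y ∈ Y₀, Tendsto (fun k => S k y) atTop (𝓝 0)) ∧
      (∀ y ∈ Y₀, Tendsto (fun k => (T ^ n k) (S k y)) atTop (𝓝 y)) := by
  rintro ⟨X₀, Y₀, n, S, hX₀, hY₀, _, _, hXlim, hSlim, hTSlim⟩
  have hp0 : p ≠ 0 := (zero_lt_one.trans hp).ne'
  have hr1 : 1 < p.toReal := by
    have := (ENNReal.toReal_lt_toReal (by simp) hp').mpr hp
    simpa using this
  set r := p.toReal with hrdef
  have hr0 : 0 < r := by linarith
  set s : ℝ := r / 2 with hsdef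
  have hs0 : 0 < s := by positivity
  have hmp := mp_τ hα
  -- the constant function 1
  have hmem : MemLp (fun _ : ℝ => (1:ℂ)) p μ01 := memLp_const 1
  set c : Lp ℂ p μ01 := hmem.toLp (fun _ : ℝ => (1:ℂ)) with hcdef
  have hcae : ⇑c =ᵐ[μ01] fun _ => (1:ℂ) := hmem.coeFn_toLp
  have hc_norm : eLpNorm (⇑c) p μ01 = 1 := by
    rw [eLpNorm_congr_ae hcae, eLpNorm_const _ hp0 (IsProbabilityMeasure.ne_zero μ01)]
    simp
  have hLp : ∀ f : Lp ℂ p μ01, eLpNorm (⇑f) p μ01 = ENNReal.ofReal ‖f‖ := fun f => by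
    rw [Lp.norm_def, ENNReal.ofReal_toReal (Lp.eLpNorm_ne_top f)]
  have hcnorm1 : ‖c‖ = 1 := by
    rw [Lp.norm_def, hc_norm, ENNReal.toReal_one]
  -- constants
  set B : ℝ≥0∞ := 2 ^ s with hBdef
  have hBne : B ≠ ∞ := ENNReal.rpow_ne_top_of_nonneg hs0.le (by norm_num)
  have hB1 : 1 ≤ B := by
    have : (1:ℝ≥0∞) ^ s ≤ 2 ^ s := ENNReal.rpow_le_rpow (by norm_num) hs0.le
    simpa [ENNReal.one_rpow] using this
  set M : ℝ≥0∞ := 4 * B ^ (4:ℕ) + 1 with hMdef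
  have hMne : M ≠ ∞ := by
    have : B ^ (4:ℕ) ≠ ∞ := ENNReal.pow_ne_top hBne
    simp only [hMdef]
    exact ENNReal.add_ne_top.mpr ⟨ENNReal.mul_ne_top (by norm_num) this, by norm_num⟩
  set m : ℝ := M.toReal with hmdef
  have hm1 : 1 ≤ m := by
    have h1 : (1:ℝ≥0∞) ≤ M := by
      simp only [hMdef]
      exact le_add_self
    have := ENNReal.toReal_mono hMne h1
    simpa using this
  have hm0 : 0 < m := by linarith
  -- choice of δ
  set δ : ℝ := (1 / (2 * m)) ^ s⁻¹ with hδdef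
  have hδ0 : 0 < δ := Real.rpow_pos_of_pos (by positivity) _
  have hδs : (ENNReal.ofReal δ) ^ s = ENNReal.ofReal (1 / (2 * m)) := by
    rw [ENNReal.ofReal_rpow_of_nonneg hδ0.le hs0.le, hδdef, ← Real.rpow_mul (by positivity),
      inv_mul_cancel₀ hs0.ne', Real.rpow_one]
  set d : ℝ≥0∞ := (ENNReal.ofReal δ) ^ s with hddef
  have hkey : d * M < 1 := by
    have hdd : d = ENNReal.ofReal (1 / (2 * m)) := hδs
    rw [hdd]
    have hMm : M ≤ ENNReal.ofReal m := by
      rw [hmdef, ENNReal.ofReal_toReal hMne]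
    calc ENNReal.ofReal (1 / (2 * m)) * M
        ≤ ENNReal.ofReal (1 / (2 * m)) * ENNReal.ofReal m := mul_le_mul_right hMm _
      _ = ENNReal.ofReal (1 / (2 * m) * m) := (ENNReal.ofReal_mul (by positivity)).symm
      _ = ENNReal.ofReal (1 / 2) := by
          congr 1
          rw [div_mul_eq_mul_div, one_mul, mul_comm 2 m, div_mul_eq_div_div, div_self hm0.ne']
      _ < 1 := by
          rw [ENNReal.ofReal_lt_one]
          norm_num
  -- pick approximants
  obtain ⟨y₀, hy₀Y, hy₀d⟩ := hY₀.exists_dist_lt c hδ0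
  obtain ⟨x₀, hx₀X, hx₀d⟩ := hX₀.exists_dist_lt c hδ0
  -- pick k
  have h1 : Tendsto (fun k => ‖(T ^ n k) x₀‖ * ‖S k y₀‖) atTop (𝓝 0) := by
    have := (hXlim x₀ hx₀X).norm.mul (hSlim y₀ hy₀Y).norm
    simpa using this
  have h2 : Tendsto (fun k => ‖(T ^ n k) (S k y₀) - y₀‖) atTop (𝓝 0) := by
    have := tendsto_sub_nhds_zero_iff.mpr (hTSlim y₀ hy₀Y)
    simpa using this.norm
  obtain ⟨k, hk1, hk2⟩ :=
    ((h1.eventually_lt_const hδ0).and (h2.eventually_lt_const hδ0)).exists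
  set N := n k with hNdef
  set e : ℝ → ℝ := (τ α)^[N] with hedef
  have hemp : MeasurePreserving e μ01 μ01 := hmp.iterate N
  set u : Lp ℂ p μ01 := S k y₀ with hudef
  set v : Lp ℂ p μ01 := (T ^ N) u with hvdef
  -- norms
  have hdiff : ∀ a b : Lp ℂ p μ01,
      eLpNorm (⇑a - ⇑b) p μ01 = ENNReal.ofReal ‖a - b‖ := fun a b => by
    rw [← eLpNorm_congr_ae (Lp.coeFn_sub a b), hLp]
  have hy₀n : eLpNorm (⇑y₀) p μ01 ^ s ≤ B := by
    rw [hLp y₀, hBdef]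
    refine ENNReal.rpow_le_rpow ?_ hs0.le
    refine (ENNReal.ofReal_le_ofReal ?_).trans (by norm_num : ENNReal.ofReal 2 ≤ 2)
    have : ‖y₀‖ ≤ ‖c‖ + ‖y₀ - c‖ := norm_le_insert' _ _
    have hd2 : ‖y₀ - c‖ < δ := by rwa [← dist_eq_norm, dist_comm]
    have hδ1 : δ ≤ 1 := by
      rw [hδdef]
      apply Real.rpow_le_one (by positivity) ?_ (by positivity)
      rw [div_le_one (by positivity)]
      linarith
    rw [hcnorm1] at this
    linarith
  have hx₀n : eLpNorm (⇑x₀) p μ01 ^ s ≤ B := by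
    rw [hLp x₀, hBdef]
    refine ENNReal.rpow_le_rpow ?_ hs0.le
    refine (ENNReal.ofReal_le_ofReal ?_).trans (by norm_num : ENNReal.ofReal 2 ≤ 2)
    have : ‖x₀‖ ≤ ‖c‖ + ‖x₀ - c‖ := norm_le_insert' _ _
    have hd2 : ‖x₀ - c‖ < δ := by rwa [← dist_eq_norm, dist_comm]
    have hδ1 : δ ≤ 1 := by
      rw [hδdef]
      apply Real.rpow_le_one (by positivity) ?_ (by positivity)
      rw [div_le_one (by positivity)]
      linarith
    rw [hcnorm1] at this
    linarith
  -- individual CS bounds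
  have hCS := fun (F G : ℝ → ℂ) (hF : AEStronglyMeasurable F μ01)
    (hG : AEStronglyMeasurable G μ01) => Dq_le_CS hp0 hp' hr0 hsdef hF hG hemp
  have hsub : ∀ a b : Lp ℂ p μ01, AEStronglyMeasurable (⇑a - ⇑b) μ01 := fun a b =>
    (Lp.aestronglyMeasurable a).sub (Lp.aestronglyMeasurable b)
  -- term 1': Dq (c - y₀) c
  have t1' : Dq s e (⇑c - ⇑y₀) ⇑c ≤ d := by
    refine (hCS _ _ (hsub c y₀) (Lp.aestronglyMeasurable c)).trans ?_
    rw [hdiff c y₀, hc_norm, ENNReal.one_rpow, mul_one]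
    show _ ≤ (ENNReal.ofReal δ) ^ s
    refine ENNReal.rpow_le_rpow (ENNReal.ofReal_le_ofReal ?_) hs0.le
    rw [← dist_eq_norm]
    exact hy₀d.le
  -- term 2': Dq y₀ (c - x₀)
  have t2' : Dq s e (⇑y₀) (⇑c - ⇑x₀) ≤ B * d := by
    refine (hCS _ _ (Lp.aestronglyMeasurable y₀) (hsub c x₀)).trans ?_
    rw [hdiff c x₀]
    refine mul_le_mul' hy₀n ?_
    show _ ≤ (ENNReal.ofReal δ) ^ s
    refine ENNReal.rpow_le_rpow (ENNReal.ofReal_le_ofReal ?_) hs0.le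
    rw [← dist_eq_norm]
    exact hx₀d.le
  -- term 3': Dq (y₀ - v) x₀
  have t3' : Dq s e (⇑y₀ - ⇑v) ⇑x₀ ≤ d * B := by
    refine (hCS _ _ (hsub y₀ v) (Lp.aestronglyMeasurable x₀)).trans ?_
    rw [hdiff y₀ v]
    refine mul_le_mul' ?_ hx₀n
    show _ ≤ (ENNReal.ofReal δ) ^ s
    refine ENNReal.rpow_le_rpow (ENNReal.ofReal_le_ofReal ?_) hs0.le
    rw [norm_sub_rev]
    exact hk2.le
  -- term 4: swap
  have t4 : Dq s e (⇑v) ⇑x₀ ≤ d := by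
    have hswap : Dq s e (⇑v) ⇑x₀ = Dq s e (⇑((T ^ N) x₀)) ⇑u := by
      rw [hvdef, hedef]
      exact Dq_swap hT hα hs0.le N u x₀
    rw [hswap]
    refine (hCS _ _ (Lp.aestronglyMeasurable _) (Lp.aestronglyMeasurable u)).trans ?_
    rw [hLp, hLp, ← ENNReal.mul_rpow_of_nonneg _ _ hs0.le,
      ← ENNReal.ofReal_mul (norm_nonneg _)]
    show _ ≤ (ENNReal.ofReal δ) ^ s
    exact ENNReal.rpow_le_rpow (ENNReal.ofReal_le_ofReal hk1.le) hs0.le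
  -- the chain
  have c1 : (1:ℝ≥0∞) = Dq s e (⇑c) ⇑c := (Dq_one hemp hcae).symm
  have c2 : Dq s e (⇑c) ⇑c ≤ B * (Dq s e (⇑y₀) ⇑c + d) := by
    refine (Dq_perturb_left hs0.le e (⇑c) (Lp.aestronglyMeasurable y₀)
      (Lp.aestronglyMeasurable c) hemp).trans ?_
    exact mul_le_mul_right (add_le_add_right t1' _) _
  have c3 : Dq s e (⇑y₀) ⇑c ≤ B * (Dq s e (⇑y₀) ⇑x₀ + B * d) := by
    refine (Dq_perturb_right hs0.le e (⇑y₀) (Lp.aestronglyMeasurable y₀)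
      (Lp.aestronglyMeasurable x₀) hemp).trans ?_
    exact mul_le_mul_right (add_le_add_right t2' _) _
  have c4 : Dq s e (⇑y₀) ⇑x₀ ≤ B * (d + d * B) := by
    refine (Dq_perturb_left hs0.le e (⇑x₀) (Lp.aestronglyMeasurable v)
      (Lp.aestronglyMeasurable x₀) hemp).trans ?_
    exact mul_le_mul_right (add_le_add t4 t3') _
  have hfinal : (1:ℝ≥0∞) ≤ d * M := by
    calc (1:ℝ≥0∞) = Dq s e (⇑c) ⇑c := c1
      _ ≤ B * (Dq s e (⇑y₀) ⇑c + d) := c2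
      _ ≤ B * ((B * (Dq s e (⇑y₀) ⇑x₀ + B * d)) + d) := by gcongr
      _ ≤ B * ((B * ((B * (d + d * B)) + B * d)) + d) := by gcongr
      _ = d * (B ^ 3 + B ^ 4 + B ^ 3 + B) := by ring
      _ ≤ d * (B ^ 4 + B ^ 4 + B ^ 4 + B ^ 4) := by
          have h34 : B ^ 3 ≤ B ^ 4 := by
            calc B ^ 3 = B ^ 3 * 1 := (mul_one _).symm
              _ ≤ B ^ 3 * B := mul_le_mul_right hB1 _
              _ = B ^ 4 := by ring
          have h14 : B ≤ B ^ 4 := by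
            calc B = 1 * 1 * 1 * B := by ring
              _ ≤ B * B * B * B := by
                  exact mul_le_mul' (mul_le_mul' (mul_le_mul' hB1 hB1) hB1) le_rfl
              _ = B ^ 4 := by ring
          exact mul_le_mul_right (add_le_add (add_le_add (add_le_add h34 le_rfl) h34) h14) _
      _ = d * (4 * B ^ (4:ℕ)) := by ring
      _ ≤ d * M := by
          rw [hMdef]
          exact mul_le_mul_right le_self_add _
  exact absurd hkey (not_lt.mpr hfinal)
end

section
/- Let φ ∈ L^∞([0,1]) be such that the Lebesgue measure of {x ∈ [0,1] : φ(x) = 0} is positive, let α ∈ [0,1] and let 1 < p < ∞. Then the weighted translation operator T_{φ,α} on L^p([0,1]) is not supercyclic. -/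
open MeasureTheory Set Filter Topology Polynomial
open scoped ENNReal NNReal

/-- If `φ ∈ L^∞([0,1])` is such that `{φ = 0}` has positive Lebesgue measure,
then for every `α ∈ [0,1]` and `1 < p < ∞` the weighted translation operator `T_{φ,α}`
on `L^p([0,1])` is not supercyclic. -/
theorem weighted_translation_not_supercyclic_of_zero_set (p : ℝ≥0∞) [Fact (1 ≤ p)]
    (hp : 1 < p) (hp' : p ≠ ∞)
    (φ : ℝ → ℂ) (hφ : MemLp φ ⊤ μ01) (hzero : 0 < μ01 {x | φ x = 0})
    (α : ℝ) (hα : α ∈ Set.Icc (0 : ℝ) 1)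
    (T : Lp ℂ p μ01 →L[ℂ] Lp ℂ p μ01) (hT : IsWTOp p φ α T) :
    ¬ ∃ f : Lp ℂ p μ01,
      Dense {g : Lp ℂ p μ01 | ∃ (c : ℂ) (n : ℕ), c • (T ^ n) f = g} := by
  rintro ⟨f, hdense⟩
  haveI : IsFiniteMeasure μ01 := by
    constructor
    rw [μ01, Measure.restrict_apply_univ, Real.volume_Icc]
    simp
  haveI : NullSingletonClass μ01 := by rw [μ01]; infer_instance
  have hp0 : p ≠ 0 := fun h => by simp [h] at hp
  -- measurable representative of φ
  have hφm := hφ.aestronglyMeasurable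
  set ψ : ℝ → ℂ := hφm.mk φ with hψdef
  have hψae : φ =ᵐ[μ01] ψ := hφm.ae_eq_mk
  set Z : Set ℝ := {x | ψ x = 0} with hZdef
  have hZmeas : MeasurableSet Z :=
    hφm.stronglyMeasurable_mk.measurable (measurableSet_singleton (0 : ℂ))
  have hZpos : 0 < μ01 Z := by
    refine lt_of_lt_of_le hzero (measure_mono_ae ?_)
    filter_upwards [hψae] with x hx hx0
    show ψ x = 0
    rw [← hx]
    exact hx0
  have hZne : μ01 Z ≠ ⊤ := measure_ne_top _ _
  have haeIcc : ∀ᵐ x ∂μ01, x ∈ Set.Icc (0 : ℝ) 1 := by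
    rw [μ01]; exact ae_restrict_mem measurableSet_Icc
  -- the closed subspace V of functions vanishing a.e. on Z
  set V : Set (Lp ℂ p μ01) := {g | ∀ᵐ x ∂μ01, x ∈ Z → g x = 0} with hVdef
  have hVmem : ∀ g : Lp ℂ p μ01, g ∈ V ↔ ∀ᵐ x ∂μ01, x ∈ Z → g x = 0 := fun g => Iff.rfl
  -- T g ∈ V for all g
  have hTV : ∀ g : Lp ℂ p μ01, T g ∈ V := by
    intro g
    filter_upwards [hT g, hψae] with x hx1 hx2 hxZ
    rw [hx1, hx2, hxZ, zero_mul]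
  have hVsmul : ∀ (c : ℂ) (g : Lp ℂ p μ01), g ∈ V → c • g ∈ V := by
    intro c g hg
    filter_upwards [hg, Lp.coeFn_smul c g] with x hx1 hx2 hxZ
    rw [hx2, Pi.smul_apply, hx1 hxZ, smul_zero]
  -- V is closed
  have hVclosed : IsClosed V := by
    refine isClosed_of_closure_subset fun g hg => ?_
    have key : eLpNorm (Z.indicator (⇑g)) p μ01 = 0 := by
      have hle : ∀ ε : ℝ≥0, 0 < ε → eLpNorm (Z.indicator (⇑g)) p μ01 ≤ 0 + (ε : ℝ≥0∞) := by
        intro ε hε'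
        have hε : (0 : ℝ≥0∞) < (ε : ℝ≥0∞) := by exact_mod_cast hε'
        obtain ⟨h, hhV, hdist⟩ := EMetric.mem_closure_iff.mp hg ε hε
        have h1 : Z.indicator (⇑g) =ᵐ[μ01] Z.indicator (⇑(g - h)) := by
          filter_upwards [hhV, Lp.coeFn_sub g h] with x hx1 hx2
          by_cases hxZ : x ∈ Z
          · rw [Set.indicator_of_mem hxZ, Set.indicator_of_mem hxZ, hx2, Pi.sub_apply,
              hx1 hxZ, sub_zero]
          · rw [Set.indicator_of_notMem hxZ, Set.indicator_of_notMem hxZ]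
        calc eLpNorm (Z.indicator (⇑g)) p μ01
            = eLpNorm (Z.indicator (⇑(g - h))) p μ01 := eLpNorm_congr_ae h1
          _ ≤ eLpNorm (⇑(g - h)) p μ01 := eLpNorm_indicator_le _
          _ = eLpNorm (⇑g - ⇑h) p μ01 := eLpNorm_congr_ae (Lp.coeFn_sub g h)
          _ = edist g h := (Lp.edist_def g h).symm
          _ ≤ (ε : ℝ≥0∞) := le_of_lt hdist
          _ = 0 + (ε : ℝ≥0∞) := (zero_add _).symm
      exact le_antisymm (ENNReal.le_of_forall_pos_le_add fun ε hε _ => hle ε hε) zero_le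
    have := (eLpNorm_eq_zero_iff ((Lp.aestronglyMeasurable g).indicator hZmeas) hp0).mp key
    filter_upwards [this] with x hx hxZ
    rw [← Set.indicator_of_mem hxZ (⇑g)]
    exact hx
  -- the one-dimensional span of f is closed
  have hspanclosed : IsClosed ((Submodule.span ℂ {f} : Submodule ℂ (Lp ℂ p μ01)) : Set (Lp ℂ p μ01)) :=
    (Submodule.span ℂ {f}).closed_of_finiteDimensional
  -- every element of the projective orbit lies in span {f} ∪ V
  have hSW : {g : Lp ℂ p μ01 | ∃ (c : ℂ) (n : ℕ), c • (T ^ n) f = g} ⊆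
      ((Submodule.span ℂ {f} : Submodule ℂ (Lp ℂ p μ01)) : Set (Lp ℂ p μ01)) ∪ V := by
    rintro g ⟨c, n, rfl⟩
    cases n with
    | zero =>
      left
      rw [pow_zero, ContinuousLinearMap.one_apply]
      exact Submodule.mem_span_singleton.mpr ⟨c, rfl⟩
    | succ n =>
      right
      have : (T ^ (n + 1)) f = T ((T ^ n) f) := by
        rw [pow_succ', ContinuousLinearMap.mul_apply]
      rw [this]
      exact hVsmul c _ (hTV _)
  -- density gives that every g is in span {f} ∪ V
  have hW : ∀ g : Lp ℂ p μ01,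
      g ∈ ((Submodule.span ℂ {f} : Submodule ℂ (Lp ℂ p μ01)) : Set (Lp ℂ p μ01)) ∪ V := by
    intro g
    have : closure {g : Lp ℂ p μ01 | ∃ (c : ℂ) (n : ℕ), c • (T ^ n) f = g} ⊆
        ((Submodule.span ℂ {f} : Submodule ℂ (Lp ℂ p μ01)) : Set (Lp ℂ p μ01)) ∪ V :=
      closure_minimal hSW (hspanclosed.union hVclosed)
    exact this (by rw [hdense.closure_eq]; trivial)
  -- first test function : indicator of Z
  set g₁ : Lp ℂ p μ01 := indicatorConstLp p hZmeas hZne (1 : ℂ) with hg₁def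
  have hg₁coe : ⇑g₁ =ᵐ[μ01] Z.indicator (fun _ => (1 : ℂ)) := indicatorConstLp_coeFn
  have hg₁V : g₁ ∉ V := by
    intro hmem
    have : ∀ᵐ x ∂μ01, x ∉ Z := by
      filter_upwards [hmem, hg₁coe] with x hx1 hx2 hxZ
      have := hx1 hxZ
      rw [hx2, Set.indicator_of_mem hxZ] at this
      exact one_ne_zero this
    have : μ01 Z = 0 := by
      have := (ae_iff.mp this)
      simpa using this
    exact absurd this hZpos.ne'
  -- second test function : x ↦ x on Z ∩ [0,1]
  set ψ₂ : ℝ → ℂ := (Z ∩ Set.Icc 0 1).indicator (fun x => (x : ℂ)) with hψ₂def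
  have hψ₂meas : AEStronglyMeasurable ψ₂ μ01 :=
    (Measurable.indicator Complex.measurable_ofReal
      (hZmeas.inter measurableSet_Icc)).aestronglyMeasurable
  have hψ₂mem : MemLp ψ₂ p μ01 := by
    refine MemLp.of_bound hψ₂meas 1 (Eventually.of_forall fun x => ?_)
    by_cases hx : x ∈ Z ∩ Set.Icc 0 1
    · rw [hψ₂def, Set.indicator_of_mem hx]
      simpa [abs_le] using ⟨by linarith [hx.2.1], hx.2.2⟩
    · rw [hψ₂def, Set.indicator_of_notMem hx]; simp
  set g₂ : Lp ℂ p μ01 := hψ₂mem.toLp ψ₂ with hg₂def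
  have hg₂coe : ⇑g₂ =ᵐ[μ01] ψ₂ := hψ₂mem.coeFn_toLp
  -- g₂ is not in V (else Z ⊆ {0} a.e.)
  have hμsub : ∀ s : Set ℝ, (∀ᵐ x ∂μ01, x ∈ Z → x ∈ s) → s.Subsingleton → False := by
    intro s hae hs
    have : μ01 Z ≤ μ01 s := measure_mono_ae hae
    rw [hs.measure_zero μ01] at this
    exact absurd (le_antisymm this zero_le) hZpos.ne'
  have hg₂V : g₂ ∉ V := by
    intro hmem
    refine hμsub {0} ?_ subsingleton_singleton
    filter_upwards [hmem, hg₂coe, haeIcc] with x hx1 hx2 hxIcc hxZ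
    have h0 := hx1 hxZ
    rw [hx2, hψ₂def, Set.indicator_of_mem (show x ∈ Z ∩ Set.Icc (0:ℝ) 1 from ⟨hxZ, hxIcc⟩)] at h0
    exact_mod_cast h0
  -- both g₁ and g₂ are multiples of f
  obtain ⟨a, ha⟩ := Submodule.mem_span_singleton.mp ((hW g₁).resolve_right hg₁V)
  obtain ⟨b, hb⟩ := Submodule.mem_span_singleton.mp ((hW g₂).resolve_right hg₂V)
  have ha0 : a ≠ 0 := by
    intro h
    apply hg₁V
    rw [← ha, h, zero_smul]
    filter_upwards [Lp.coeFn_zero ℂ p μ01] with x hx _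
    exact hx
  -- a • g₂ = b • g₁, hence a.e. on Z, a * x = b
  have hkey : a • g₂ = b • g₁ := by rw [← ha, ← hb, smul_comm]
  refine hμsub {x : ℝ | (x : ℂ) = b / a} ?_ ?_
  · have h1 : ⇑(a • g₂) =ᵐ[μ01] ⇑(b • g₁) := by rw [hkey]
    filter_upwards [h1, Lp.coeFn_smul a g₂, Lp.coeFn_smul b g₁, hg₂coe, hg₁coe, haeIcc]
      with x e1 e2 e3 e4 e5 hxIcc hxZ
    have : a * ψ₂ x = b * Z.indicator (fun _ => (1 : ℂ)) x := by
      have := e1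
      rw [e2, e3] at this
      simpa [Pi.smul_apply, smul_eq_mul, e4, e5] using this
    rw [hψ₂def, Set.indicator_of_mem (show x ∈ Z ∩ Set.Icc (0:ℝ) 1 from ⟨hxZ, hxIcc⟩), Set.indicator_of_mem hxZ] at this
    have : (x : ℂ) = b / a := by field_simp at this ⊢; linear_combination this
    exact this
  · intro x hx y hy
    have : (x : ℂ) = (y : ℂ) := by rw [hx, hy]
    exact_mod_cast this
end

section
/- Let X be a separable infinite-dimensional complex Banach space and let T be a bounded linear operator on X whose adjoint T^* has empty point spectrum. Then the following are equivalent: (i) T is cyclic; (ii) for every pair (U, V) of non-empty open subsets of X, there exists a complex polynomial P such that P(T)(U) ∩ V ≠ ∅. Moreover, in this case the set of cyclic vectors for T is a dense G_δ subset of X. -/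
open Filter Topology Polynomial

lemma aux_dense_of_dual {X : Type*} [NormedAddCommGroup X] [NormedSpace ℂ X]
    (S : Submodule ℂ X)
    (h : ∀ g : X →L[ℂ] ℂ, (∀ a ∈ S, g a = 0) → g = 0) : Dense (S : Set X) := by
  by_contra hne
  obtain ⟨x, hx⟩ : ∃ x, x ∉ S.topologicalClosure := by
    by_contra hh
    push_neg at hh
    exact hne (fun x => by
      rw [← Submodule.topologicalClosure_coe]
      exact hh x)
  have hconv : Convex ℝ (S.topologicalClosure : Set X) :=
    (S.topologicalClosure.restrictScalars ℝ).convex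
  obtain ⟨f, u, hfa, hfx⟩ := RCLike.geometric_hahn_banach_closed_point (𝕜 := ℂ)
    hconv (Submodule.isClosed_topologicalClosure S) hx
  have hf0 : ∀ a ∈ S.topologicalClosure, f a = 0 := by
    intro a ha
    by_contra hfa0
    have hmem : (((|u| + 1 : ℝ) : ℂ) / f a) • a ∈ S.topologicalClosure :=
      Submodule.smul_mem _ _ ha
    have h2 := hfa _ hmem
    rw [map_smul, smul_eq_mul, div_mul_cancel₀ _ hfa0] at h2
    have h2' : (|u| + 1 : ℝ) < u := by
      have : RCLike.re ((|u| + 1 : ℝ) : ℂ) = (|u| + 1 : ℝ) := RCLike.ofReal_re _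
      rw [this] at h2; exact h2
    have := le_abs_self u
    linarith
  have hf : f = 0 := h f (fun a ha => hf0 a (Submodule.le_topologicalClosure S ha))
  have h0 := hfa 0 (Submodule.zero_mem _)
  rw [hf] at hfx
  simp at hfx h0
  linarith

lemma aux_span_eq {X : Type*} [NormedAddCommGroup X] [NormedSpace ℂ X]
    (T : X →L[ℂ] X) (x : X) :
    (Submodule.span ℂ (Set.range fun n : ℕ => (T ^ n) x) : Set X)
      = Set.range fun P : ℂ[X] => (aeval T P : X →L[ℂ] X) x := by
  apply subset_antisymm
  · intro y hy
    induction hy using Submodule.span_induction with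
    | mem y hy =>
      obtain ⟨n, rfl⟩ := hy
      exact ⟨Polynomial.X ^ n, by simp [map_pow]⟩
    | zero => exact ⟨0, by simp⟩
    | add a b _ _ ha hb =>
      obtain ⟨P, rfl⟩ := ha
      obtain ⟨Q, rfl⟩ := hb
      exact ⟨P + Q, by simp⟩
    | smul c a _ ha =>
      obtain ⟨P, rfl⟩ := ha
      exact ⟨c • P, by simp⟩
  · rintro _ ⟨P, rfl⟩
    show (aeval T P : X →L[ℂ] X) x ∈ (Submodule.span ℂ (Set.range fun n : ℕ => (T ^ n) x) : Set X)
    induction P using Polynomial.induction_on' with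
    | add p q hp hq =>
      simpa [map_add] using add_mem hp hq
    | monomial n a =>
      have : (aeval T (monomial n a) : X →L[ℂ] X) x = a • (T ^ n) x := by
        simp [aeval_monomial, Algebra.algebraMap_eq_smul_one, ContinuousLinearMap.mul_apply]
      rw [this]
      exact Submodule.smul_mem _ _ (Submodule.subset_span ⟨n, rfl⟩)

lemma aux_denseRange {X : Type*} [NormedAddCommGroup X] [NormedSpace ℂ X]
    (T : X →L[ℂ] X)
    (hpt : ∀ (c : ℂ) (g : StrongDual ℂ X), (∀ x, g (T x) = c * g x) → g = 0) :
    ∀ Q : ℂ[X], Q ≠ 0 → DenseRange (aeval T Q : X →L[ℂ] X) := by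
  have hlin : ∀ c : ℂ, DenseRange (aeval T (Polynomial.X - C c) : X →L[ℂ] X) := by
    intro c
    have hS : Dense ((LinearMap.range ((aeval T (Polynomial.X - C c) : X →L[ℂ] X)
        : X →ₗ[ℂ] X)) : Set X) := by
      apply aux_dense_of_dual
      intro g hg
      apply hpt c g
      intro v
      have := hg _ (LinearMap.mem_range_self _ v)
      have hv : (aeval T (Polynomial.X - C c) : X →L[ℂ] X) v = T v - c • v := by
        simp [map_sub, aeval_C, Algebra.algebraMap_eq_smul_one, ContinuousLinearMap.sub_apply]
      have h3 : g (T v - c • v) = 0 := by rw [← hv]; exact this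
      rw [map_sub, map_smul, sub_eq_zero] at h3
      rw [h3]; simp [smul_eq_mul]
    have : (Set.range ⇑(aeval T (Polynomial.X - C c) : X →L[ℂ] X))
        = ((LinearMap.range ((aeval T (Polynomial.X - C c) : X →L[ℂ] X) : X →ₗ[ℂ] X)) : Set X) := by
      ext z; simp [LinearMap.mem_range]
    show Dense (Set.range ⇑(aeval T (Polynomial.X - C c) : X →L[ℂ] X))
    rw [this]
    exact hS
  suffices H : ∀ n (Q : ℂ[X]), Q.natDegree = n → Q ≠ 0 → DenseRange ⇑(aeval T Q : X →L[ℂ] X) by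
    intro Q hQ; exact H Q.natDegree Q rfl hQ
  intro n
  induction n using Nat.strong_induction_on with
  | _ n ih =>
    intro Q hn hQ
    rcases Nat.eq_zero_or_pos n with h0 | hpos
    · subst h0
      obtain ⟨a, rfl⟩ := Polynomial.natDegree_eq_zero.mp hn
      have ha : a ≠ 0 := fun h => hQ (by simp [h])
      have hsurj : Function.Surjective (aeval T (C a) : X →L[ℂ] X) := by
        intro y
        refine ⟨a⁻¹ • y, ?_⟩
        simp [aeval_C, Algebra.algebraMap_eq_smul_one, smul_smul, inv_mul_cancel₀ ha]
      exact hsurj.denseRange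
    · have hdeg : 0 < Q.degree := natDegree_pos_iff_degree_pos.mp (hn ▸ hpos)
      obtain ⟨z, hz⟩ := Complex.exists_root hdeg
      obtain ⟨R, hR⟩ := (dvd_iff_isRoot).mpr hz
      have hRne : R ≠ 0 := fun h => hQ (by rw [hR, h, mul_zero])
      have hXne : (Polynomial.X - C z : ℂ[X]) ≠ 0 := X_sub_C_ne_zero z
      have hdR : R.natDegree < n := by
        have := natDegree_mul hXne hRne
        rw [← hR, hn, natDegree_X_sub_C] at this
        omega
      have hRd : DenseRange (aeval T R : X →L[ℂ] X) := ih _ hdR R rfl hRne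
      have heq : (aeval T Q : X →L[ℂ] X) =
          (aeval T (Polynomial.X - C z) : X →L[ℂ] X) * (aeval T R : X →L[ℂ] X) := by
        rw [hR, map_mul]
      have hcoe : ⇑(aeval T Q : X →L[ℂ] X) =
          ⇑(aeval T (Polynomial.X - C z) : X →L[ℂ] X) ∘ ⇑(aeval T R : X →L[ℂ] X) := by
        rw [heq]; rfl
      rw [hcoe]
      exact DenseRange.comp (hlin z) hRd (aeval T (Polynomial.X - C z) : X →L[ℂ] X).continuous

/-- Let `T` be a bounded operator on a separable infinite-dimensional complex
Banach space `X` whose adjoint has empty point spectrum. Then `T` is cyclic iff for every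
pair `(U, V)` of non-empty open subsets of `X` there is a polynomial `P` with
`P(T)(U) ∩ V ≠ ∅`; and in this case the set of cyclic vectors is a dense `G_δ` in `X`. -/
theorem cyclic_iff_transitive_of_adjoint_no_eigenvalue
    {X : Type*} [NormedAddCommGroup X] [NormedSpace ℂ X] [CompleteSpace X]
    [TopologicalSpace.SeparableSpace X]
    (hdim : ¬ FiniteDimensional ℂ X) (T : X →L[ℂ] X)
    (hpt : ∀ (c : ℂ) (g : StrongDual ℂ X), (∀ x, g (T x) = c * g x) → g = 0) :
    ((∃ x : X, Dense (Submodule.span ℂ (Set.range fun n : ℕ => (T ^ n) x) : Set X)) ↔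
      (∀ U V : Set X, IsOpen U → IsOpen V → U.Nonempty → V.Nonempty →
        ∃ P : ℂ[X], ((aeval T P : X →L[ℂ] X) '' U ∩ V).Nonempty)) ∧
    ((∃ x : X, Dense (Submodule.span ℂ (Set.range fun n : ℕ => (T ^ n) x) : Set X)) →
      IsGδ {x : X | Dense (Submodule.span ℂ (Set.range fun n : ℕ => (T ^ n) x) : Set X)} ∧
      Dense {x : X | Dense (Submodule.span ℂ (Set.range fun n : ℕ => (T ^ n) x) : Set X)}) := by
  classical
  have hnt : Nontrivial X := by
    rcases subsingleton_or_nontrivial X with h | h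
    · haveI := h
      exact absurd (inferInstance : FiniteDimensional ℂ X) hdim
    · exact h
  haveI : SecondCountableTopology X := UniformSpace.secondCountable_of_separable X
  obtain ⟨B, hBc, hBe, hB⟩ := TopologicalSpace.exists_countable_basis X
  have hdr := aux_denseRange T hpt
  have hmem : ∀ x : X,
      Dense (Submodule.span ℂ (Set.range fun n : ℕ => (T ^ n) x) : Set X) ↔
      Dense (Set.range fun P : ℂ[X] => (aeval T P : X →L[ℂ] X) x) := by
    intro x; rw [aux_span_eq]
  have hCeq : {x : X | Dense (Submodule.span ℂ (Set.range fun n : ℕ => (T ^ n) x) : Set X)}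
      = ⋂ V ∈ B, ⋃ P : ℂ[X], (⇑(aeval T P : X →L[ℂ] X)) ⁻¹' V := by
    ext x
    simp only [Set.mem_setOf_eq, Set.mem_iInter, Set.mem_iUnion, Set.mem_preimage]
    rw [hmem x, hB.dense_iff]
    constructor
    · intro h V hV
      obtain ⟨y, hy1, P, hy2⟩ := h V hV (Set.nonempty_iff_ne_empty.mpr (fun he => hBe (he ▸ hV)))
      exact ⟨P, by rw [← hy2] at hy1; exact hy1⟩
    · intro h V hV _
      obtain ⟨P, hP⟩ := h V hV
      exact ⟨_, hP, P, rfl⟩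
  have hopen : ∀ V ∈ B, IsOpen (⋃ P : ℂ[X], (⇑(aeval T P : X →L[ℂ] X)) ⁻¹' V) :=
    fun V hV => isOpen_iUnion fun P => (hB.isOpen hV).preimage (aeval T P : X →L[ℂ] X).continuous
  have h12 : (∃ x : X, Dense (Submodule.span ℂ (Set.range fun n : ℕ => (T ^ n) x) : Set X)) →
      (∀ U V : Set X, IsOpen U → IsOpen V → U.Nonempty → V.Nonempty →
        ∃ P : ℂ[X], ((aeval T P : X →L[ℂ] X) '' U ∩ V).Nonempty) := by
    rintro ⟨x, hx⟩ U V hU hV hUne hVne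
    have hdx : Dense (Set.range fun P : ℂ[X] => (aeval T P : X →L[ℂ] X) x) := (hmem x).mp hx
    have hU' : (U ∩ {(0:X)}ᶜ).Nonempty := by
      obtain ⟨z, hz⟩ := hUne
      rcases eq_or_ne z 0 with rfl | hz0
      · haveI : NeBot (𝓝[≠] (0:X)) := Module.punctured_nhds_neBot ℂ X 0
        exact Filter.nonempty_of_mem
          (Filter.inter_mem (mem_nhdsWithin_of_mem_nhds (hU.mem_nhds hz)) self_mem_nhdsWithin)
      · exact ⟨z, hz, hz0⟩
    obtain ⟨y, ⟨hyU, hy0⟩, Q, rfl⟩ :=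
      hdx.inter_open_nonempty (U ∩ {(0:X)}ᶜ) (hU.inter isOpen_compl_singleton) hU'
    have hQne : Q ≠ 0 := by
      rintro rfl
      simp only [map_zero] at hy0
      exact hy0 (by simp)
    have hdy : Dense (Set.range fun P : ℂ[X] =>
        (aeval T P : X →L[ℂ] X) ((aeval T Q : X →L[ℂ] X) x)) := by
      have himg : Dense ((⇑(aeval T Q : X →L[ℂ] X)) ''
          (Set.range fun P : ℂ[X] => (aeval T P : X →L[ℂ] X) x)) :=
        (hdr Q hQne).dense_image (aeval T Q : X →L[ℂ] X).continuous hdx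
      apply Dense.mono ?_ himg
      rintro _ ⟨_, ⟨P, rfl⟩, rfl⟩
      refine ⟨P, ?_⟩
      show (aeval T P : X →L[ℂ] X) ((aeval T Q : X →L[ℂ] X) x)
        = (aeval T Q : X →L[ℂ] X) ((aeval T P : X →L[ℂ] X) x)
      rw [← ContinuousLinearMap.mul_apply, ← ContinuousLinearMap.mul_apply, ← map_mul, ← map_mul,
        mul_comm P Q]
    obtain ⟨w, hwV, P, hP⟩ := hdy.inter_open_nonempty V hV hVne
    exact ⟨P, w, ⟨(aeval T Q : X →L[ℂ] X) x, hyU, hP⟩, hwV⟩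
  have h2 : (∀ U V : Set X, IsOpen U → IsOpen V → U.Nonempty → V.Nonempty →
      ∃ P : ℂ[X], ((aeval T P : X →L[ℂ] X) '' U ∩ V).Nonempty) →
      Dense {x : X | Dense (Submodule.span ℂ (Set.range fun n : ℕ => (T ^ n) x) : Set X)} := by
    intro hT
    rw [hCeq]
    apply dense_biInter_of_isOpen hopen hBc
    intro V hV
    rw [dense_iff_inter_open]
    intro U hU hUne
    have hVne : V.Nonempty := Set.nonempty_iff_ne_empty.mpr (fun he => hBe (he ▸ hV))
    obtain ⟨P, w, ⟨u, huU, hw⟩, hwV⟩ := hT U V hU (hB.isOpen hV) hUne hVne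
    exact ⟨u, huU, Set.mem_iUnion.mpr ⟨P, by rw [Set.mem_preimage, hw]; exact hwV⟩⟩
  refine ⟨⟨h12, fun hT => ?_⟩, fun hcyc => ⟨hCeq ▸ IsGδ.biInter_of_isOpen hBc hopen, h2 (h12 hcyc)⟩⟩
  obtain ⟨x, hx⟩ := (h2 hT).nonempty
  exact ⟨x, hx⟩
end
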